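/- Let Γ be a finite connected bipartite graph with ordered bipartition (B|B') that is r-starlike relative to N for some r ≥ 2, and locally (G,2)-distance transitive for some G ≤ Aut(Γ) with 1 ≠ N ⊴ G. Then either Γ is a complete bipartite graph, or: any two distinct vertices of Γ have distinct neighbourhoods (Γ(x) = Γ(x') implies x = x'), and G acts faithfully on B and faithfully on B'. -/

import Mathlib

open SimpleGraph

section Prelude

variable {V : Type*}

/-- `g` is an automorphism of the graph `Γ`. -/
def IsGraphAut (Γ : SimpleGraph V) (g : Equiv.Perm V) : Prop :=
  ∀ u v : V, Γ.Adj (g u) (g v) ↔ Γ.Adj u v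

/-- `(B | Bᶜ)` is an (ordered) bipartition of `Γ`: every edge joins `B` and `Bᶜ`. -/
def IsBipartition (Γ : SimpleGraph V) (B : Set V) : Prop :=
  ∀ u v : V, Γ.Adj u v → (u ∈ B ↔ v ∉ B)

/-- The orbit of `x` under a subgroup `N` of permutations of `V`. -/
def POrbit (N : Subgroup (Equiv.Perm V)) (x : V) : Set V :=
  {y | ∃ n ∈ N, n x = y}

/-- `Γ` is locally `(G,s)`-distance transitive: the diameter is at least `s` and for
every vertex `v` and every `1 ≤ i ≤ s` the stabiliser of `v` in `G` is transitive on
the set of vertices at distance `i` from `v`. -/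
def LocallyDistTrans (Γ : SimpleGraph V) (G : Subgroup (Equiv.Perm V)) (s : ℕ) : Prop :=
  s ≤ Γ.diam ∧
    ∀ (v x y : V) (i : ℕ), 1 ≤ i → i ≤ s → Γ.dist v x = i → Γ.dist v y = i →
      ∃ g ∈ G, g v = v ∧ g x = y

/-- `Γ`, bipartite with ordered bipartition `(B | Bᶜ)`, is `r`-starlike relative to `N`:
`N` leaves `B` invariant, is transitive on `B`, and has exactly `r` orbits on `Bᶜ`. -/
def IsStarlike (Γ : SimpleGraph V) (B : Set V) (N : Subgroup (Equiv.Perm V)) (r : ℕ) : Prop :=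
  (∀ n ∈ N, ∀ v : V, n v ∈ B ↔ v ∈ B) ∧
    (∀ x ∈ B, ∀ y ∈ B, ∃ n ∈ N, n x = y) ∧
    {S : Set V | ∃ x ∈ Bᶜ, S = POrbit N x}.ncard = r

/-- `G` is transitive on the set `S` of (ordered) pairs. -/
def PairTrans (G : Subgroup (Equiv.Perm V)) (S : Set (V × V)) : Prop :=
  ∀ p ∈ S, ∀ q ∈ S, ∃ g ∈ G, g p.1 = q.1 ∧ g p.2 = q.2

/-- The adjacency design of the bipartite graph `Γ` with ordered bipartition `(B | Bᶜ)`
(points `B`, blocks `Bᶜ`, incidence = adjacency) is `G`-pairwise transitive. -/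
def AdjPT (Γ : SimpleGraph V) (B : Set V) (G : Subgroup (Equiv.Perm V)) : Prop :=
  (∀ g ∈ G, ∀ v : V, g v ∈ B ↔ v ∈ B) ∧
  PairTrans G {p | p.1 ∈ B ∧ p.2 ∈ Bᶜ ∧ Γ.Adj p.1 p.2} ∧
  PairTrans G {p | p.1 ∈ B ∧ p.2 ∈ Bᶜ ∧ ¬ Γ.Adj p.1 p.2} ∧
  PairTrans G {p | p.1 ∈ B ∧ p.2 ∈ B ∧ p.1 ≠ p.2 ∧ ∃ b ∈ Bᶜ, Γ.Adj p.1 b ∧ Γ.Adj p.2 b} ∧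
  PairTrans G {p | p.1 ∈ B ∧ p.2 ∈ B ∧ p.1 ≠ p.2 ∧ ¬ ∃ b ∈ Bᶜ, Γ.Adj p.1 b ∧ Γ.Adj p.2 b} ∧
  PairTrans G {p | p.1 ∈ Bᶜ ∧ p.2 ∈ Bᶜ ∧ p.1 ≠ p.2 ∧ ∃ x ∈ B, Γ.Adj x p.1 ∧ Γ.Adj x p.2} ∧
  PairTrans G {p | p.1 ∈ Bᶜ ∧ p.2 ∈ Bᶜ ∧ p.1 ≠ p.2 ∧ ¬ ∃ x ∈ B, Γ.Adj x p.1 ∧ Γ.Adj x p.2}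

/-- The adjacency design of `Γ` (points `B`, blocks `Bᶜ`) is `N`-nicely affine:
`N` acts as automorphisms preserving the biparts, transitively on points, and there is a
constant `μ` such that distinct blocks in different `N`-orbits have exactly `μ` common
points, while distinct blocks in the same `N`-orbit have no common point. -/
def AdjNA (Γ : SimpleGraph V) (B : Set V) (N : Subgroup (Equiv.Perm V)) : Prop :=
  (∀ n ∈ N, ∀ v : V, n v ∈ B ↔ v ∈ B) ∧
  (∀ x ∈ B, ∀ y ∈ B, ∃ n ∈ N, n x = y) ∧
  ∃ μ : ℕ, ∀ b ∈ Bᶜ, ∀ b' ∈ Bᶜ, b ≠ b' →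
    ((b' ∈ POrbit N b → ¬ ∃ x, Γ.Adj x b ∧ Γ.Adj x b') ∧
     (b' ∉ POrbit N b → {x | Γ.Adj x b ∧ Γ.Adj x b'}.ncard = μ))

/-- The adjacency design of `Γ` (points `B`, blocks `Bᶜ`) is affine: the blocks can be
partitioned into parallel classes, and there is a positive constant `μ` such that blocks
in distinct parallel classes have exactly `μ` common points. -/
def AdjAffine (Γ : SimpleGraph V) (B : Set V) : Prop :=
  ∃ 𝓒 : Set (Set V), (∀ C ∈ 𝓒, C ⊆ Bᶜ) ∧ (∀ b ∈ Bᶜ, ∃! C, C ∈ 𝓒 ∧ b ∈ C) ∧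
    (∀ C ∈ 𝓒, ∀ x ∈ B, ∃! b, b ∈ C ∧ Γ.Adj x b) ∧
    ∃ μ : ℕ, 0 < μ ∧ ∀ C ∈ 𝓒, ∀ C' ∈ 𝓒, C ≠ C' → ∀ b ∈ C, ∀ b' ∈ C',
      {x | Γ.Adj x b ∧ Γ.Adj x b'}.ncard = μ

end Prelude

section DesignPrelude

variable {P L : Type*}

/-- The design `(P, L, I)` is `G`-pairwise transitive. -/
def DesignPT (I : P → L → Prop) (G : Type*) [Group G] [MulAction G P] [MulAction G L] :
    Prop :=
  (∀ (x : P) (b : L) (x' : P) (b' : L), I x b → I x' b' →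
      ∃ g : G, g • x = x' ∧ g • b = b') ∧
  (∀ (x : P) (b : L) (x' : P) (b' : L), ¬ I x b → ¬ I x' b' →
      ∃ g : G, g • x = x' ∧ g • b = b') ∧
  (∀ x y x' y' : P, x ≠ y → x' ≠ y' → (∃ b, I x b ∧ I y b) → (∃ b, I x' b ∧ I y' b) →
      ∃ g : G, g • x = x' ∧ g • y = y') ∧
  (∀ x y x' y' : P, x ≠ y → x' ≠ y' → ¬ (∃ b, I x b ∧ I y b) → ¬ (∃ b, I x' b ∧ I y' b) →
      ∃ g : G, g • x = x' ∧ g • y = y') ∧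
  (∀ b c b' c' : L, b ≠ c → b' ≠ c' → (∃ x, I x b ∧ I x c) → (∃ x, I x b' ∧ I x c') →
      ∃ g : G, g • b = b' ∧ g • c = c') ∧
  (∀ b c b' c' : L, b ≠ c → b' ≠ c' → ¬ (∃ x, I x b ∧ I x c) → ¬ (∃ x, I x b' ∧ I x c') →
      ∃ g : G, g • b = b' ∧ g • c = c')

/-- The design `(P, L, I)` is `N`-nicely affine for the subgroup `N` of `G`. -/
def DesignNA (I : P → L → Prop) (G : Type*) [Group G] [MulAction G P] [MulAction G L]
    (N : Subgroup G) : Prop :=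
  (∀ x y : P, ∃ n ∈ N, n • x = y) ∧
  ∃ μ : ℕ, ∀ b b' : L, b ≠ b' →
    (((∃ n ∈ N, n • b = b') → ¬ ∃ x, I x b ∧ I x b') ∧
     ((¬ ∃ n ∈ N, n • b = b') → {x | I x b ∧ I x b'}.ncard = μ))

/-- The incidence graph of the design `(P, L, I)`. -/
def DIncGraph (I : P → L → Prop) : SimpleGraph (P ⊕ L) :=
  SimpleGraph.fromRel (fun a b => ∃ x s, a = Sum.inl x ∧ b = Sum.inr s ∧ I x s)

end DesignPrelude

section SetDesign

variable {V : Type*}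

/-- Pairwise transitivity for a design whose points are the elements of `V`, whose
blocks are the members of `𝓑` (identified with their point-sets) and whose
incidence relation is membership; `G` is a group of permutations of `V`. -/
def SetPT (𝓑 : Set (Set V)) (G : Subgroup (Equiv.Perm V)) : Prop :=
  (∀ x : V, ∀ s ∈ 𝓑, ∀ x' : V, ∀ s' ∈ 𝓑, x ∈ s → x' ∈ s' →
      ∃ g ∈ G, g x = x' ∧ (fun z => g z) '' s = s') ∧
  (∀ x : V, ∀ s ∈ 𝓑, ∀ x' : V, ∀ s' ∈ 𝓑, x ∉ s → x' ∉ s' →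
      ∃ g ∈ G, g x = x' ∧ (fun z => g z) '' s = s') ∧
  (∀ x y x' y' : V, x ≠ y → x' ≠ y' → (∃ s ∈ 𝓑, x ∈ s ∧ y ∈ s) → (∃ s ∈ 𝓑, x' ∈ s ∧ y' ∈ s) →
      ∃ g ∈ G, g x = x' ∧ g y = y') ∧
  (∀ x y x' y' : V, x ≠ y → x' ≠ y' → ¬ (∃ s ∈ 𝓑, x ∈ s ∧ y ∈ s) → ¬ (∃ s ∈ 𝓑, x' ∈ s ∧ y' ∈ s) →
      ∃ g ∈ G, g x = x' ∧ g y = y') ∧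
  (∀ s ∈ 𝓑, ∀ t ∈ 𝓑, ∀ s' ∈ 𝓑, ∀ t' ∈ 𝓑, s ≠ t → s' ≠ t' →
      (s ∩ t).Nonempty → (s' ∩ t').Nonempty →
      ∃ g ∈ G, (fun z => g z) '' s = s' ∧ (fun z => g z) '' t = t') ∧
  (∀ s ∈ 𝓑, ∀ t ∈ 𝓑, ∀ s' ∈ 𝓑, ∀ t' ∈ 𝓑, s ≠ t → s' ≠ t' →
      s ∩ t = ∅ → s' ∩ t' = ∅ →
      ∃ g ∈ G, (fun z => g z) '' s = s' ∧ (fun z => g z) '' t = t')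

/-- Nice affineness for a design with point set `V`, blocks `𝓑` (point-sets) and
incidence given by membership, relative to a permutation group `N`. -/
def SetNA (𝓑 : Set (Set V)) (N : Subgroup (Equiv.Perm V)) : Prop :=
  (∀ x y : V, ∃ n ∈ N, n x = y) ∧
  (∀ n ∈ N, ∀ s ∈ 𝓑, (fun z => n z) '' s ∈ 𝓑) ∧
  ∃ μ : ℕ, ∀ s ∈ 𝓑, ∀ s' ∈ 𝓑, s ≠ s' →
    (((∃ n ∈ N, (fun z => n z) '' s = s') → s ∩ s' = ∅) ∧
     ((¬ ∃ n ∈ N, (fun z => n z) '' s = s') → (s ∩ s').ncard = μ))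

end SetDesign

section QuotientGraph

variable {V : Type*}

/-- The setoid on vertices whose classes are the `N`-orbits. -/
def orbitSetoid (N : Subgroup (Equiv.Perm V)) : Setoid V where
  r x y := ∃ n ∈ N, n x = y
  iseqv := by
    refine ⟨fun x => ⟨1, N.one_mem, rfl⟩, ?_, ?_⟩
    · rintro x y ⟨n, hn, rfl⟩
      exact ⟨n⁻¹, N.inv_mem hn, by simp⟩
    · rintro x y z ⟨n, hn, rfl⟩ ⟨m, hm, rfl⟩
      exact ⟨m * n, N.mul_mem hm hn, rfl⟩

/-- The normal quotient graph `Γ_N`: vertices are the `N`-orbits, two distinct orbits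
being adjacent iff some vertex of one is adjacent to some vertex of the other. -/
def quotGraph (Γ : SimpleGraph V) (N : Subgroup (Equiv.Perm V)) :
    SimpleGraph (Quotient (orbitSetoid N)) :=
  SimpleGraph.fromRel (fun a b => ∃ x y : V, Γ.Adj x y ∧
    Quotient.mk (orbitSetoid N) x = a ∧ Quotient.mk (orbitSetoid N) y = b)

end QuotientGraph

section Subdivision

variable {W : Type*}

/-- The subdivision graph `S(Σ)` of a graph `Σ`: vertices are `EΣ ⊕ VΣ`, an edge
being adjacent to its endpoints. -/
def SubdivisionGraph (Sg : SimpleGraph W) : SimpleGraph (↥Sg.edgeSet ⊕ W) :=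
  SimpleGraph.fromRel (fun a b => ∃ (e : Sg.edgeSet) (w : W),
    a = Sum.inl e ∧ b = Sum.inr w ∧ w ∈ (e : Sym2 W))

/-- The graph on `B'` in which two vertices are adjacent iff they are at distance `2`
in `Γ`. -/
def distTwoGraph (Γ : SimpleGraph W) (B' : Set W) : SimpleGraph ↥B' where
  Adj a b := Γ.dist ↑a ↑b = 2
  symm := by
    constructor
    intro a b h
    exact (SimpleGraph.dist_comm).trans h
  loopless := by
    constructor
    intro a h
    simp [SimpleGraph.dist_self] at h

/-- `f 0, f 1, …, f t` is a `t`-arc of `Sg`. -/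
def IsArcOf (Sg : SimpleGraph W) (t : ℕ) (f : ℕ → W) : Prop :=
  (∀ i : ℕ, i < t → Sg.Adj (f i) (f (i + 1))) ∧
  (∀ i : ℕ, 1 ≤ i → i + 1 ≤ t → f (i - 1) ≠ f (i + 1))

end Subdivision


private lemma aut_neighborSet' {V : Type*} {Γ : SimpleGraph V} {g : Equiv.Perm V}
    (hg : IsGraphAut Γ g) (v : V) :
    Γ.neighborSet (g v) = (fun z => g z) '' Γ.neighborSet v := by
  ext u
  simp only [SimpleGraph.mem_neighborSet, Set.mem_image]
  constructor
  · intro h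
    refine ⟨g⁻¹ u, (hg v (g⁻¹ u)).mp ?_, Equiv.apply_symm_apply g u⟩
    simpa using h
  · rintro ⟨w, hw, rfl⟩
    exact (hg v w).mpr hw

private lemma walk_parity' {V : Type*} {Γ : SimpleGraph V} {B : Set V}
    (hbip : IsBipartition Γ B) :
    ∀ {a b : V} (p : Γ.Walk a b), ((a ∈ B) ↔ (b ∈ B)) ↔ Even p.length := by
  intro a b p
  induction p with
  | nil => simp
  | cons h q ih =>
    have h1 := hbip _ _ h
    simp only [SimpleGraph.Walk.length_cons, Nat.even_add_one, ← ih]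
    tauto

/-- **Lemma `lem:diffneigh`**.  If `Γ` is `r`-starlike (`r ≥ 2`) relative to `N` with
ordered bipartition `(B|Bᶜ)` and locally `(G,2)`-distance transitive with `1 ≠ N ⊴ G`,
then either `Γ` is complete bipartite, or distinct vertices have distinct
neighbourhoods and `G` acts faithfully on both `B` and `Bᶜ`. -/
theorem statement9 {V : Type*} [Fintype V] (Γ : SimpleGraph V) (B : Set V)
    (hconn : Γ.Connected) (hbip : IsBipartition Γ B)
    (G N : Subgroup (Equiv.Perm V)) (hGaut : ∀ g ∈ G, IsGraphAut Γ g)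
    (hNG : N ≤ G) (hN1 : N ≠ ⊥) (hnorm : ∀ g ∈ G, ∀ n ∈ N, g * n * g⁻¹ ∈ N)
    (r : ℕ) (hr : 2 ≤ r)
    (hstar : IsStarlike Γ B N r) (hldt : LocallyDistTrans Γ G 2) :
    (∀ x ∈ B, ∀ y ∈ Bᶜ, Γ.Adj x y) ∨
      ((∀ x x' : V, Γ.neighborSet x = Γ.neighborSet x' → x = x') ∧
        (∀ g ∈ G, (∀ x ∈ B, g x = x) → g = 1) ∧
        (∀ g ∈ G, (∀ x ∈ Bᶜ, g x = x) → g = 1)) := by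
  clear hNG hN1 hnorm hr hstar
  obtain ⟨hdiam, htrans⟩ := hldt
  have hnontriv : Nontrivial V := by
    have : Nonempty V := hconn.nonempty
    obtain ⟨u, v, huv⟩ := Γ.exists_dist_eq_diam
    refine ⟨u, v, fun h => ?_⟩
    subst h
    rw [SimpleGraph.dist_self] at huv
    omega
  have hnbr : ∀ x : V, ∃ y, Γ.Adj x y := by
    intro x
    obtain ⟨y, hy⟩ := exists_ne x
    obtain ⟨p⟩ := hconn x y
    cases p with
    | nil => exact absurd rfl hy
    | cons h q => exact ⟨_, h⟩
  have hstep : ∀ (v z : V) (d : ℕ), Γ.dist v z = d + 1 →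
      ∃ z', Γ.Adj z' z ∧ Γ.dist v z' = d := by
    intro v z d hd
    obtain ⟨p, hp⟩ := (hconn v z).exists_walk_length_eq_dist
    have hnn : ¬ p.reverse.Nil := by
      rw [SimpleGraph.Walk.nil_iff_length_eq, SimpleGraph.Walk.length_reverse, hp, hd]
      simp
    obtain ⟨u, ha, q, hq⟩ := SimpleGraph.Walk.not_nil_iff.mp hnn
    have hlen : q.length = d := by
      have h' := congrArg SimpleGraph.Walk.length hq
      rw [SimpleGraph.Walk.length_reverse, hp, hd, SimpleGraph.Walk.length_cons] at h'
      omega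
    have h1 : Γ.dist v u ≤ d := by
      have := SimpleGraph.dist_le q.reverse
      rwa [SimpleGraph.Walk.length_reverse, hlen] at this
    have h2 : d ≤ Γ.dist v u := by
      have ht := hconn.dist_triangle (u := v) (v := u) (w := z)
      have huz : Γ.dist u z = 1 := SimpleGraph.dist_eq_one_iff_adj.mpr ha.symm
      omega
    exact ⟨u, ha.symm, le_antisymm h1 h2⟩
  have lemA : ∀ a b z : V, a ≠ b → Γ.neighborSet a = Γ.neighborSet b →
      Γ.dist a z = 2 → Γ.neighborSet z = Γ.neighborSet a := by
    intro a b z hab hN hz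
    have hnadj : ¬ Γ.Adj a b := by
      intro h
      have hb : b ∈ Γ.neighborSet a := h
      rw [hN] at hb
      exact Γ.loopless.irrefl b hb
    obtain ⟨u, hu⟩ := hnbr a
    have hub : Γ.Adj u b := by
      have h' : u ∈ Γ.neighborSet a := hu
      rw [hN] at h'
      exact h'.symm
    have hdab : Γ.dist a b = 2 := by
      have hle : Γ.dist a b ≤ 2 := by
        have := SimpleGraph.dist_le (SimpleGraph.Walk.cons hu hub.toWalk)
        simpa using this
      have h0 : Γ.dist a b ≠ 0 := fun h => hab (hconn.dist_eq_zero_iff.mp h)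
      have h1 : Γ.dist a b ≠ 1 := fun h => hnadj (SimpleGraph.dist_eq_one_iff_adj.mp h)
      omega
    obtain ⟨g, hgG, hga, hgb⟩ := htrans a b z 2 (by norm_num) le_rfl hdab hz
    have hg := hGaut g hgG
    calc Γ.neighborSet z = Γ.neighborSet (g b) := by rw [hgb]
      _ = (fun w => g w) '' Γ.neighborSet b := aut_neighborSet' hg b
      _ = (fun w => g w) '' Γ.neighborSet a := by rw [hN]
      _ = Γ.neighborSet (g a) := (aut_neighborSet' hg a).symm
      _ = Γ.neighborSet a := by rw [hga]
  have lemB : ∀ (a b : V), a ≠ b → Γ.neighborSet a = Γ.neighborSet b →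
      ∀ d : ℕ, Even d → ∀ z : V, Γ.dist a z = d → Γ.neighborSet z = Γ.neighborSet a := by
    intro a b hab hN d
    induction d using Nat.strong_induction_on with
    | _ d ih =>
      intro hev z hz
      rcases Nat.eq_zero_or_pos d with h0 | hpos
      · subst h0
        rw [← (hconn.dist_eq_zero_iff).mp hz]
      · obtain ⟨k, hk⟩ := hev
        have h2 : 2 ≤ d := by omega
        obtain ⟨d', rfl⟩ : ∃ d', d = d' + 2 := ⟨d - 2, by omega⟩
        obtain ⟨z', hz'adj, hz'⟩ := hstep a z (d' + 1) hz
        obtain ⟨z'', hz''adj, hz''⟩ := hstep a z' d' hz'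
        have hd2 : Γ.dist z'' z = 2 := by
          have hle : Γ.dist z'' z ≤ 2 := by
            have := SimpleGraph.dist_le (SimpleGraph.Walk.cons hz''adj hz'adj.toWalk)
            simpa using this
          have ht := hconn.dist_triangle (u := a) (v := z'') (w := z)
          omega
        have hzz'' : Γ.neighborSet z'' = Γ.neighborSet a :=
          ih d' (by omega) ⟨k - 1, by omega⟩ z'' hz''
        rcases eq_or_ne z'' a with he | he
        · rw [he] at hd2
          exact lemA a b z hab hN hd2
        · rw [lemA z'' a z he hzz'' hd2, hzz'']
  by_cases hcb : ∀ x ∈ B, ∀ y ∈ Bᶜ, Γ.Adj x y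
  · exact Or.inl hcb
  right
  have hdn : ∀ x x' : V, Γ.neighborSet x = Γ.neighborSet x' → x = x' := by
    intro x x' hNe
    by_contra hne
    apply hcb
    intro p hp q hq
    rw [Set.mem_compl_iff] at hq
    have hsame : ∀ w : V, ((w ∈ B) ↔ (x ∈ B)) → Γ.neighborSet w = Γ.neighborSet x := by
      intro w hw
      have hev : Even (Γ.dist x w) := by
        obtain ⟨pw, hpw⟩ := (hconn x w).exists_walk_length_eq_dist
        rw [← hpw]
        exact (walk_parity' hbip pw).mp (by tauto)
      exact lemB x x' hne hNe _ hev w rfl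
    obtain ⟨u, hu⟩ := hnbr q
    have huB : u ∈ B := by
      by_contra h
      exact hq ((hbip q u hu).mpr h)
    by_cases hxB : x ∈ B
    · have h1 := hsame p (by tauto)
      have h2 := hsame u (by tauto)
      have hqmem : q ∈ Γ.neighborSet u := hu.symm
      rw [h2, ← h1] at hqmem
      exact hqmem
    · obtain ⟨t, ht⟩ := hnbr p
      have htB : t ∉ B := (hbip p t ht).mp hp
      have h1 := hsame q (by tauto)
      have h2 := hsame t (by tauto)
      have hpmem : p ∈ Γ.neighborSet t := ht.symm
      rw [h2, ← h1] at hpmem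
      exact hpmem.symm
  refine ⟨hdn, ?_, ?_⟩
  · intro g hg hfix
    have hgaut := hGaut g hg
    ext v
    show g v = v
    by_cases hv : v ∈ B
    · exact hfix v hv
    · apply hdn
      rw [aut_neighborSet' hgaut v]
      have hsub : ∀ w ∈ Γ.neighborSet v, g w = w := by
        intro w hw
        apply hfix
        by_contra hwB
        exact hv ((hbip v w hw).mpr hwB)
      calc (fun z => g z) '' Γ.neighborSet v = id '' Γ.neighborSet v :=
            Set.image_congr hsub
        _ = Γ.neighborSet v := Set.image_id _
  · intro g hg hfix
    have hgaut := hGaut g hg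
    ext v
    show g v = v
    by_cases hv : v ∈ B
    · apply hdn
      rw [aut_neighborSet' hgaut v]
      have hsub : ∀ w ∈ Γ.neighborSet v, g w = w := by
        intro w hw
        apply hfix
        rw [Set.mem_compl_iff]
        exact (hbip v w hw).mp hv
      calc (fun z => g z) '' Γ.neighborSet v = id '' Γ.neighborSet v :=
            Set.image_congr hsub
        _ = Γ.neighborSet v := Set.image_id _
    · exact hfix v hv
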